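/- Let α be a perfect elimination ordering of a chordal graph G on n vertices and, for j = n down to 1, define trees T^{(j)} recursively: T^{(n)} has single node {α(n)}; given T^{(j+1)}, let M = N_{α(j)} ∩ {α(j+1),...,α(n)}; if M is itself a maximal clique (node) of T^{(j+1)}, replace that node by M ∪ {α(j)}; otherwise add a new node M ∪ {α(j)} adjacent to some maximal clique K of T^{(j+1)} containing M. Then each T^{(j)} is a clique tree of the subgraph of G induced by {α(j),...,α(n)}; in particular T^{(1)} is a clique tree of G. -/

import Mathlib

open scoped Classical
open Finset

/-- The vertices `{α(j), α(j+1), …, α(n−1)}` occurring from position `j` on in the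
ordering `α` (0-based positions). -/
noncomputable def peoLater (n : ℕ) (α : ℕ → Fin n) (j : ℕ) : Finset (Fin n) :=
  Finset.univ.filter (fun v => ∃ i, j ≤ i ∧ i < n ∧ α i = v)

/-- The later neighbors `M = N_{α(j)} ∩ {α(j+1),…,α(n−1)}` of the vertex in
position `j`. -/
noncomputable def laterNbrs {n : ℕ} (G : SimpleGraph (Fin n)) (α : ℕ → Fin n) (j : ℕ) :
    Finset (Fin n) :=
  Finset.univ.filter (fun v => G.Adj (α j) v ∧ v ∈ peoLater n α (j + 1))

/-- `K` is a maximal clique of the subgraph of `G` induced by the vertex set `W`. -/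
def IsMaxCliqueIn {n : ℕ} (G : SimpleGraph (Fin n)) (W K : Finset (Fin n)) : Prop :=
  K ⊆ W ∧ G.IsClique ↑K ∧
    ∀ K' : Finset (Fin n), K' ⊆ W → G.IsClique ↑K' → K ⊆ K' → K = K'

/-- `(Vs, Es)` is a clique tree of the subgraph of `G` induced by `W`: the nodes `Vs`
are exactly the maximal cliques of that subgraph, the edges `Es` join nodes of `Vs`,
the resulting graph is a tree, and for every vertex `v ∈ W` the cliques containing
`v` induce a connected subgraph (hence a subtree). -/
def IsCliqueTreeOn {n : ℕ} (G : SimpleGraph (Fin n)) (W : Finset (Fin n))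
    (Vs : Finset (Finset (Fin n))) (Es : Finset (Sym2 (Finset (Fin n)))) : Prop :=
  (∀ K, K ∈ Vs ↔ IsMaxCliqueIn G W K) ∧
  (∀ e ∈ Es, ∀ K ∈ e, K ∈ Vs) ∧
  ((SimpleGraph.fromEdgeSet (↑Es : Set (Sym2 (Finset (Fin n))))).induce
      (↑Vs : Set (Finset (Fin n)))).IsTree ∧
  ∀ v ∈ W,
    ((SimpleGraph.fromEdgeSet (↑Es : Set (Sym2 (Finset (Fin n))))).induce
        {K : Finset (Fin n) | K ∈ Vs ∧ v ∈ K}).Connected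

namespace CT

open SimpleGraph

variable {V : Type*} {V' : Type*}

/-! ### General graph lemmas -/

lemma isTree_of_iso {A : SimpleGraph V} {B : SimpleGraph V'} (e : A ≃g B) (h : A.IsTree) :
    B.IsTree := by
  constructor
  · exact e.connected_iff.mp h.isConnected
  · intro v c hc
    have hinj : Function.Injective e.symm.toHom := e.symm.toEquiv.injective
    have := hc.map hinj
    exact h.IsAcyclic (c.map e.symm.toHom) this

/-- restrict a walk whose support lies in `S` to the induced subgraph on `S` -/
def toInduceWalk {H : SimpleGraph V} (S : Set V) :
    ∀ {u v : V} (p : H.Walk u v) (hs : ∀ z ∈ p.support, z ∈ S),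
      (H.induce S).Walk ⟨u, hs u p.start_mem_support⟩ ⟨v, hs v p.end_mem_support⟩
  | _, _, SimpleGraph.Walk.nil, _ => SimpleGraph.Walk.nil
  | u, v, SimpleGraph.Walk.cons h p, hs =>
      SimpleGraph.Walk.cons (by simpa using h)
        (toInduceWalk S p (fun z hz => hs z (by simp [hz])))

lemma toInduceWalk_map {H : SimpleGraph V} (S : Set V) :
    ∀ {u v : V} (p : H.Walk u v) (hs : ∀ z ∈ p.support, z ∈ S),
      (toInduceWalk S p hs).map (SimpleGraph.Embedding.induce S).toHom = p
  | _, _, SimpleGraph.Walk.nil, _ => rfl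
  | u, v, SimpleGraph.Walk.cons h p, hs => by
      simp only [toInduceWalk, SimpleGraph.Walk.map_cons]
      congr 1
      exact toInduceWalk_map S p _

lemma toInduceWalk_isCycle {H : SimpleGraph V} (S : Set V) {u : V} (p : H.Walk u u)
    (hs : ∀ z ∈ p.support, z ∈ S) (hp : p.IsCycle) : (toInduceWalk S p hs).IsCycle := by
  have hinj : Function.Injective (SimpleGraph.Embedding.induce (G := H) S).toHom :=
    Subtype.val_injective
  rw [← SimpleGraph.Walk.map_isCycle_iff_of_injective hinj]
  rw [toInduceWalk_map]
  exact hp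

lemma connected_induce_singleton (H : SimpleGraph V) (S : Set V) (a : V) (hS : S = {a}) :
    (H.induce S).Connected := by
  subst hS
  haveI : Subsingleton ({a} : Set V) := ⟨fun x y => Subtype.ext (x.2.trans y.2.symm)⟩
  rw [SimpleGraph.connected_iff]
  refine ⟨fun v w => ?_, ⟨⟨a, rfl⟩⟩⟩
  rw [Subsingleton.elim v w]

lemma isTree_induce_singleton (H : SimpleGraph V) (S : Set V) (a : V) (hS : S = {a}) :
    (H.induce S).IsTree := by
  refine ⟨connected_induce_singleton H S a hS, ?_⟩
  intro v c hc
  cases c with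
  | nil => exact hc.not_of_nil
  | cons h p =>
    subst hS
    haveI : Subsingleton ({a} : Set V) := ⟨fun x y => Subtype.ext (x.2.trans y.2.symm)⟩
    exact h.ne (Subsingleton.elim _ _)

lemma induce_congr {H H' : SimpleGraph V} {S : Set V}
    (h : ∀ a ∈ S, ∀ b ∈ S, (H.Adj a b ↔ H'.Adj a b)) : H.induce S = H'.induce S := by
  ext a b
  simp only [comap_adj, Function.Embedding.coe_subtype]
  exact h a a.2 b b.2

/-- an iso between induced subgraphs from a relabeling function -/
noncomputable def induceIso (H H' : SimpleGraph V) (S T : Set V) (f : V → V)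
    (hmap : ∀ a ∈ S, f a ∈ T)
    (hinj : ∀ a ∈ S, ∀ b ∈ S, f a = f b → a = b)
    (hsurj : ∀ b ∈ T, ∃ a ∈ S, f a = b)
    (hadj : ∀ a ∈ S, ∀ b ∈ S, (H.Adj a b ↔ H'.Adj (f a) (f b))) :
    H.induce S ≃g H'.induce T := by
  have hbij : Function.Bijective (fun a : S => (⟨f a.1, hmap a.1 a.2⟩ : T)) := by
    constructor
    · intro a b hab
      exact Subtype.ext (hinj a.1 a.2 b.1 b.2 (congrArg Subtype.val hab))
    · rintro ⟨b, hb⟩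
      obtain ⟨a, ha, rfl⟩ := hsurj b hb
      exact ⟨⟨a, ha⟩, rfl⟩
  refine ⟨Equiv.ofBijective _ hbij, ?_⟩
  intro a b
  simp only [Equiv.ofBijective_apply, comap_adj, Function.Embedding.coe_subtype]
  exact (hadj a.1 a.2 b.1 b.2).symm

lemma connected_insert {H : SimpleGraph V} {S : Set V} {x y : V} (hy : y ∈ S)
    (hadj : H.Adj x y) (hconn : (H.induce S).Connected) :
    (H.induce (insert x S)).Connected := by
  rw [SimpleGraph.connected_iff]
  refine ⟨fun v w => ?_, ⟨⟨x, Set.mem_insert x S⟩⟩⟩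
  let ι : H.induce S →g H.induce (insert x S) :=
    ⟨fun a => ⟨a.1, Set.mem_insert_of_mem x a.2⟩, by
      intro a b hab
      simpa using hab⟩
  have key : ∀ w : (insert x S : Set V),
      (H.induce (insert x S)).Reachable ⟨y, Set.mem_insert_of_mem x hy⟩ w := by
    intro w
    by_cases hwx : w.1 = x
    · have : (H.induce (insert x S)).Adj ⟨y, Set.mem_insert_of_mem x hy⟩ w := by
        simp only [comap_adj, Function.Embedding.coe_subtype]
        rw [hwx]; exact hadj.symm
      exact this.reachable
    · have hwS : w.1 ∈ S := w.2.resolve_left hwx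
      exact (hconn.preconnected ⟨y, hy⟩ ⟨w.1, hwS⟩).map ι
  exact (key v).symm.trans (key w)

lemma isTree_insert_leaf {H : SimpleGraph V} {S : Set V} {x y : V}
    (hxS : x ∉ S) (hy : y ∈ S) (hadj : H.Adj x y)
    (hnbr : ∀ z, H.Adj x z → z = y)
    (htree : (H.induce S).IsTree) : (H.induce (insert x S)).IsTree := by
  refine ⟨connected_insert hy hadj htree.isConnected, ?_⟩
  intro v c hc
  set x' : (insert x S : Set V) := ⟨x, Set.mem_insert x S⟩ with hx'
  by_cases hxs : x' ∈ c.support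
  · have hc' := hc.rotate hxs
    set c' := c.rotate x' hxs with hc'def
    cases hcc : c' with
    | nil => rw [hcc] at hc'; exact hc'.not_of_nil
    | cons h p =>
      rw [hcc] at hc'
      rename_i w
      have hwy : w.1 = y := hnbr w.1 (by simpa using h)
      have hwy' : w = (⟨y, Set.mem_insert_of_mem x hy⟩ : (insert x S : Set V)) :=
        Subtype.ext hwy
      subst hwy'
      rw [SimpleGraph.Walk.cons_isCycle_iff] at hc'
      obtain ⟨hpath, hedge⟩ := hc'
      have hne : x' ≠ (⟨y, Set.mem_insert_of_mem x hy⟩ : (insert x S : Set V)) := by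
        intro hh
        have hxy : x = y := congrArg Subtype.val hh
        exact hxS (by rw [hxy]; exact hy)
      obtain ⟨z, hq, q, hpe⟩ := SimpleGraph.Walk.exists_eq_cons_of_ne hne p.reverse
      have hzy : z.1 = y := hnbr z.1 (by simpa using hq)
      have hzy' : z = (⟨y, Set.mem_insert_of_mem x hy⟩ : (insert x S : Set V)) :=
        Subtype.ext hzy
      subst hzy'
      apply hedge
      have h1 : s(x', (⟨y, Set.mem_insert_of_mem x hy⟩ : (insert x S : Set V)))
          ∈ p.reverse.edges := by
        rw [hpe]; simp
      rw [SimpleGraph.Walk.edges_reverse, List.mem_reverse] at h1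
      exact h1
  · let ι := (SimpleGraph.Embedding.induce (G := H) (insert x S : Set V)).toHom
    have hcm : (c.map ι).IsCycle := hc.map Subtype.val_injective
    have hsupp : ∀ z ∈ (c.map ι).support, z ∈ S := by
      intro z hz
      rw [SimpleGraph.Walk.support_map] at hz
      obtain ⟨w, hw, rfl⟩ := List.mem_map.mp hz
      rcases w.2 with h2 | h2
      · exact absurd (Subtype.ext h2 : w = x') (fun hh => hxs (hh ▸ hw))
      · exact h2
    exact htree.IsAcyclic _ (toInduceWalk_isCycle S (c.map ι) hsupp hcm)

/-! ### Lemmas about the elimination ordering -/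

variable {n : ℕ} {G : SimpleGraph (Fin n)} {α : ℕ → Fin n}

lemma mem_peoLater {j : ℕ} {v : Fin n} :
    v ∈ peoLater n α j ↔ ∃ i, j ≤ i ∧ i < n ∧ α i = v := by
  simp [peoLater]

lemma mem_laterNbrs {j : ℕ} {v : Fin n} :
    v ∈ laterNbrs G α j ↔ G.Adj (α j) v ∧ v ∈ peoLater n α (j + 1) := by
  simp [laterNbrs]

section

variable (hα : ∀ v : Fin n, ∃! j, j < n ∧ α j = v)
include hα

lemma alpha_not_later {j : ℕ} (hj : j < n) : α j ∉ peoLater n α (j + 1) := by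
  rw [mem_peoLater]
  rintro ⟨i, hij, hin, hiv⟩
  obtain ⟨k, -, hk⟩ := hα (α j)
  have h1 : i = k := hk i ⟨hin, hiv⟩
  have h2 : j = k := hk j ⟨hj, rfl⟩
  omega

omit hα in
lemma peoLater_succ {j : ℕ} (hj : j < n) :
    peoLater n α j = insert (α j) (peoLater n α (j + 1)) := by
  ext v
  rw [mem_peoLater, Finset.mem_insert, mem_peoLater]
  constructor
  · rintro ⟨i, hij, hin, rfl⟩
    rcases eq_or_lt_of_le hij with rfl | h
    · exact Or.inl rfl
    · exact Or.inr ⟨i, h, hin, rfl⟩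
  · rintro (rfl | ⟨i, hij, hin, rfl⟩)
    · exact ⟨j, le_refl _, hj, rfl⟩
    · exact ⟨i, by omega, hin, rfl⟩

omit hα in
lemma peoLater_last (hn : 0 < n) : peoLater n α (n - 1) = {α (n - 1)} := by
  ext v
  rw [mem_peoLater, Finset.mem_singleton]
  constructor
  · rintro ⟨i, h1, h2, rfl⟩
    have : i = n - 1 := by omega
    rw [this]
  · rintro rfl
    exact ⟨n - 1, le_refl _, by omega, rfl⟩

end

lemma laterNbrs_subset {j : ℕ} : laterNbrs G α j ⊆ peoLater n α (j + 1) := fun v hv =>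
  (mem_laterNbrs.mp hv).2

section MaxClique

variable {j : ℕ} (hα : ∀ v : Fin n, ∃! k, k < n ∧ α k = v) (hj : j < n)
  (hpeo : ∀ j < n, G.IsClique (↑(laterNbrs G α j) : Set (Fin n)))

include hα hj

lemma a_not_mem_W : α j ∉ peoLater n α (j + 1) := alpha_not_later hα hj

include hpeo

lemma Mp_clique : G.IsClique (↑(insert (α j) (laterNbrs G α j)) : Set (Fin n)) := by
  intro u hu v hv huv
  simp only [Finset.coe_insert, Set.mem_insert_iff, Finset.mem_coe] at hu hv
  rcases hu with rfl | hu
  · rcases hv with rfl | hv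
    · exact absurd rfl huv
    · exact (mem_laterNbrs.mp hv).1
  · rcases hv with rfl | hv
    · exact ((mem_laterNbrs.mp hu).1).symm
    · exact hpeo j hj hu hv huv

omit hpeo in
lemma memMp_of_clique {K : Finset (Fin n)} (hKW : K ⊆ peoLater n α j)
    (hK : G.IsClique ↑K) (haK : α j ∈ K) : K ⊆ insert (α j) (laterNbrs G α j) := by
  intro v hv
  rcases eq_or_ne v (α j) with rfl | hva
  · exact Finset.mem_insert_self _ _
  · refine Finset.mem_insert_of_mem ?_
    rw [mem_laterNbrs]
    have hadj : G.Adj (α j) v := hK (by exact_mod_cast haK) (by exact_mod_cast hv) (Ne.symm hva)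
    refine ⟨hadj, ?_⟩
    have := hKW hv
    rw [peoLater_succ hj, Finset.mem_insert] at this
    exact this.resolve_left hva

lemma Mp_maxclique : IsMaxCliqueIn G (peoLater n α j) (insert (α j) (laterNbrs G α j)) := by
  refine ⟨?_, Mp_clique hα hj hpeo, ?_⟩
  · rw [peoLater_succ hj]
    exact Finset.insert_subset_insert _ laterNbrs_subset
  · intro K' hK'W hK' hsub
    refine Finset.Subset.antisymm hsub ?_
    exact memMp_of_clique hα hj hK'W hK' (hsub (Finset.mem_insert_self _ _))

/-- the key characterization of maximal cliques after adding vertex `a = α j` -/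
lemma maxclique_iff {K : Finset (Fin n)} :
    IsMaxCliqueIn G (peoLater n α j) K ↔
      (K = insert (α j) (laterNbrs G α j) ∨
        (IsMaxCliqueIn G (peoLater n α (j + 1)) K ∧ K ≠ laterNbrs G α j)) := by
  constructor
  · rintro ⟨hKW, hK, hmax⟩
    by_cases haK : α j ∈ K
    · left
      have hsub : K ⊆ insert (α j) (laterNbrs G α j) := memMp_of_clique hα hj hKW hK haK
      exact hmax _ (Mp_maxclique hα hj hpeo).1 (Mp_clique hα hj hpeo) hsub
    · right
      have hKW' : K ⊆ peoLater n α (j + 1) := by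
        intro v hv
        have := hKW hv
        rw [peoLater_succ hj, Finset.mem_insert] at this
        exact this.resolve_left (fun h => haK (h ▸ hv))
      constructor
      · refine ⟨hKW', hK, ?_⟩
        intro K' hK'W hK' hsub
        exact hmax K' (fun v hv => by
          rw [peoLater_succ hj]; exact Finset.mem_insert_of_mem (hK'W hv)) hK' hsub
      · rintro rfl
        have : laterNbrs G α j = insert (α j) (laterNbrs G α j) :=
          hmax _ (Mp_maxclique hα hj hpeo).1 (Mp_clique hα hj hpeo)
            (Finset.subset_insert _ _)
        have haM : α j ∈ laterNbrs G α j := this ▸ Finset.mem_insert_self _ _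
        exact (a_not_mem_W hα hj) (laterNbrs_subset haM)
  · rintro (rfl | ⟨⟨hKW, hK, hmax⟩, hKM⟩)
    · exact Mp_maxclique hα hj hpeo
    · refine ⟨fun v hv => by
        rw [peoLater_succ hj]; exact Finset.mem_insert_of_mem (hKW hv), hK, ?_⟩
      intro K' hK'W hK' hsub
      by_cases haK' : α j ∈ K'
      · exfalso
        have hsubMp : K' ⊆ insert (α j) (laterNbrs G α j) :=
          memMp_of_clique hα hj hK'W hK' haK'
        have haK : α j ∉ K := fun h => (a_not_mem_W hα hj) (hKW h)
        have hKM' : K ⊆ laterNbrs G α j := by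
          intro v hv
          have := hsubMp (hsub hv)
          rw [Finset.mem_insert] at this
          exact this.resolve_left (fun h => haK (h ▸ hv))
        have : K = laterNbrs G α j := hmax _ laterNbrs_subset (hpeo j hj) hKM'
        exact hKM this
      · have hK'W' : K' ⊆ peoLater n α (j + 1) := by
          intro v hv
          have := hK'W hv
          rw [peoLater_succ hj, Finset.mem_insert] at this
          exact this.resolve_left (fun h => haK' (h ▸ hv))
        exact hmax K' hK'W' hK' hsub

end MaxClique

/-! ### The inductive step -/

lemma maxclique_singleton {a : Fin n} {K : Finset (Fin n)} :
    IsMaxCliqueIn G {a} K ↔ K = {a} := by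
  have hclique : G.IsClique (↑({a} : Finset (Fin n)) : Set (Fin n)) := by
    rw [Finset.coe_singleton]
    intro x hx y hy hxy
    exact absurd (hx.trans hy.symm) hxy
  constructor
  · rintro ⟨h1, h2, h3⟩
    rcases Finset.subset_singleton_iff.mp h1 with rfl | rfl
    · exact h3 {a} (le_refl _) hclique (Finset.empty_subset _)
    · rfl
  · rintro rfl
    exact ⟨le_refl _, hclique, fun K' hsub _ hKsub => Finset.Subset.antisymm hKsub hsub⟩

lemma step_case (hα : ∀ v : Fin n, ∃! k, k < n ∧ α k = v)
    (hpeo : ∀ j < n, G.IsClique (↑(laterNbrs G α j) : Set (Fin n)))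
    {j : ℕ} (hj1 : j + 1 < n)
    {Vs0 Vs1 : Finset (Finset (Fin n))} {Es0 Es1 : Finset (Sym2 (Finset (Fin n)))}
    (hcase :
      (laterNbrs G α j ∈ Vs1 ∧
        Vs0 = insert (insert (α j) (laterNbrs G α j)) (Vs1 \ {laterNbrs G α j}) ∧
        Es0 = Es1.image (Sym2.map (fun K =>
          if K = laterNbrs G α j then insert (α j) (laterNbrs G α j) else K))) ∨
      (laterNbrs G α j ∉ Vs1 ∧
        ∃ K ∈ Vs1, laterNbrs G α j ⊆ K ∧
          Vs0 = insert (insert (α j) (laterNbrs G α j)) Vs1 ∧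
          Es0 = insert s(insert (α j) (laterNbrs G α j), K) Es1))
    (IH : IsCliqueTreeOn G (peoLater n α (j + 1)) Vs1 Es1) :
    IsCliqueTreeOn G (peoLater n α j) Vs0 Es0 := by
  obtain ⟨ihN, ihE, ihT, ihS⟩ := IH
  have hj : j < n := by omega
  set a := α j with ha
  set M := laterNbrs G α j with hMdef
  set Mp := insert a M with hMpdef
  have hVsW : ∀ K ∈ Vs1, K ⊆ peoLater n α (j + 1) := fun K hK => ((ihN K).mp hK).1
  have haW : a ∉ peoLater n α (j + 1) := alpha_not_later hα hj
  have haK : ∀ K ∈ Vs1, a ∉ K := fun K hK h => haW (hVsW K hK h)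
  have hMpV : Mp ∉ Vs1 := fun h => haK _ h (Finset.mem_insert_self _ _)
  have hnodes0 : ∀ K, IsMaxCliqueIn G (peoLater n α j) K ↔ (K = Mp ∨ (K ∈ Vs1 ∧ K ≠ M)) := by
    intro K
    rw [maxclique_iff hα hj hpeo]
    constructor
    · rintro (rfl | ⟨hmc, hne⟩)
      · exact Or.inl rfl
      · exact Or.inr ⟨(ihN K).mpr hmc, hne⟩
    · rintro (rfl | ⟨hK, hne⟩)
      · exact Or.inl rfl
      · exact Or.inr ⟨(ihN K).mp hK, hne⟩
  rcases hcase with ⟨hMin, hVs, hEs⟩ | ⟨hMnot, K0, hK0, hMK0, hVs, hEs⟩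
  · -- Case 1: replace the node M by Mp
    set r : Finset (Fin n) → Finset (Fin n) := fun K => if K = M then Mp else K with hrdef
    have hrM : r M = Mp := if_pos rfl
    have hrO : ∀ K, K ≠ M → r K = K := fun K h => if_neg h
    have hVmem : ∀ K, K ∈ Vs0 ↔ (K = Mp ∨ (K ∈ Vs1 ∧ K ≠ M)) := by
      intro K
      rw [hVs]
      simp [Finset.mem_insert, Finset.mem_sdiff, Finset.mem_singleton, and_comm]
    have hrmem : ∀ K ∈ Vs1, r K ∈ Vs0 := by
      intro K hK
      rw [hVmem]
      by_cases h : K = M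
      · subst h; rw [hrM]; exact Or.inl rfl
      · rw [hrO K h]; exact Or.inr ⟨hK, h⟩
    have hrinj : ∀ K ∈ Vs1, ∀ K' ∈ Vs1, r K = r K' → K = K' := by
      intro K hK K' hK' hr
      by_cases h : K = M
      · by_cases h' : K' = M
        · rw [h, h']
        · rw [hrO K' h'] at hr
          rw [h, hrM] at hr
          exact absurd (hr ▸ hK' : Mp ∈ Vs1) hMpV
      · by_cases h' : K' = M
        · rw [hrO K h] at hr
          rw [h', hrM] at hr
          exact absurd (hr ▸ hK : Mp ∈ Vs1) hMpV
        · rwa [hrO K h, hrO K' h'] at hr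
    have hrsurj : ∀ B ∈ Vs0, ∃ A ∈ Vs1, r A = B := by
      intro B hB
      rcases (hVmem B).mp hB with rfl | ⟨hB1, hBne⟩
      · exact ⟨M, hMin, hrM⟩
      · exact ⟨B, hB1, hrO B hBne⟩
    have hedge : ∀ A ∈ Vs1, ∀ B ∈ Vs1, (s(A, B) ∈ Es1 ↔ s(r A, r B) ∈ Es0) := by
      intro A hA B hB
      rw [hEs]
      constructor
      · intro h
        exact Finset.mem_image.mpr ⟨s(A, B), h, Sym2.map_pair_eq _ _ _⟩
      · intro h
        obtain ⟨e, he, hmape⟩ := Finset.mem_image.mp h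
        induction e using Sym2.ind with
        | _ c d =>
          rw [Sym2.map_pair_eq] at hmape
          have hcV : c ∈ Vs1 := ihE _ he c (by rw [Sym2.mem_iff]; exact Or.inl rfl)
          have hdV : d ∈ Vs1 := ihE _ he d (by rw [Sym2.mem_iff]; exact Or.inr rfl)
          rcases Sym2.eq_iff.mp hmape with ⟨h1, h2⟩ | ⟨h1, h2⟩
          · rw [hrinj c hcV A hA h1, hrinj d hdV B hB h2] at he
            exact he
          · rw [hrinj c hcV B hB h1, hrinj d hdV A hA h2] at he
            rwa [Sym2.eq_swap] at he
    have hadjiff : ∀ A ∈ Vs1, ∀ B ∈ Vs1,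
        ((fromEdgeSet (↑Es1 : Set (Sym2 (Finset (Fin n))))).Adj A B ↔
          (fromEdgeSet (↑Es0 : Set (Sym2 (Finset (Fin n))))).Adj (r A) (r B)) := by
      intro A hA B hB
      rw [fromEdgeSet_adj, fromEdgeSet_adj, Finset.mem_coe, Finset.mem_coe]
      constructor
      · rintro ⟨h1, h2⟩
        exact ⟨(hedge A hA B hB).mp h1, fun hr => h2 (hrinj A hA B hB hr)⟩
      · rintro ⟨h1, h2⟩
        exact ⟨(hedge A hA B hB).mpr h1, fun hr => h2 (by rw [hr])⟩
    refine ⟨fun K => (hVmem K).trans (hnodes0 K).symm, ?_, ?_, ?_⟩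
    · -- edges have endpoints in Vs0
      intro e he K hKe
      rw [hEs] at he
      obtain ⟨e', he', rfl⟩ := Finset.mem_image.mp he
      obtain ⟨A, hAe, rfl⟩ := Sym2.mem_map.mp hKe
      exact hrmem A (ihE _ he' A hAe)
    · -- tree
      refine isTree_of_iso (induceIso _ _ _ _ r ?_ ?_ ?_ ?_) ihT
      · intro A hA; exact Finset.mem_coe.mpr (hrmem A (Finset.mem_coe.mp hA))
      · intro A hA B hB; exact hrinj A (Finset.mem_coe.mp hA) B (Finset.mem_coe.mp hB)
      · intro B hB
        obtain ⟨A, hA, hAB⟩ := hrsurj B (Finset.mem_coe.mp hB)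
        exact ⟨A, Finset.mem_coe.mpr hA, hAB⟩
      · intro A hA B hB; exact hadjiff A (Finset.mem_coe.mp hA) B (Finset.mem_coe.mp hB)
    · -- subtrees
      intro v hv
      rw [peoLater_succ hj, Finset.mem_insert] at hv
      rcases hv with rfl | hv
      · refine connected_induce_singleton _ _ Mp ?_
        ext K
        simp only [Set.mem_setOf_eq, Set.mem_singleton_iff]
        constructor
        · rintro ⟨hK, hvK⟩
          rcases (hVmem K).mp hK with rfl | ⟨hK1, -⟩
          · rfl
          · exact absurd hvK (haK K hK1)
        · rintro rfl
          exact ⟨(hVmem Mp).mpr (Or.inl rfl), Finset.mem_insert_self _ _⟩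
      · have hva : v ≠ a := fun h => haW (h ▸ hv)
        have hvr : ∀ K, (v ∈ r K ↔ v ∈ K) := by
          intro K
          by_cases h : K = M
          · subst h
            rw [hrM, hMpdef, Finset.mem_insert]
            exact ⟨fun h => h.resolve_left hva, Or.inr⟩
          · rw [hrO K h]
        refine (Iso.connected_iff (induceIso
          (fromEdgeSet (↑Es1 : Set (Sym2 (Finset (Fin n)))))
          (fromEdgeSet (↑Es0 : Set (Sym2 (Finset (Fin n)))))
          {K | K ∈ Vs1 ∧ v ∈ K} {K | K ∈ Vs0 ∧ v ∈ K} r ?_ ?_ ?_ ?_)).mp (ihS v hv)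
        · rintro A ⟨hA, hvA⟩
          exact ⟨hrmem A hA, (hvr A).mpr hvA⟩
        · rintro A ⟨hA, -⟩ B ⟨hB, -⟩
          exact hrinj A hA B hB
        · rintro B ⟨hB, hvB⟩
          obtain ⟨A, hA, rfl⟩ := hrsurj B hB
          exact ⟨A, ⟨hA, (hvr A).mp hvB⟩, rfl⟩
        · rintro A ⟨hA, -⟩ B ⟨hB, -⟩
          exact hadjiff A hA B hB
  · -- Case 2: attach a new leaf Mp to K0
    have hMpK0 : Mp ≠ K0 := fun h => haK K0 hK0 (h ▸ Finset.mem_insert_self _ _)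
    have hVs1sub : ∀ K ∈ Vs1, K ∈ Vs0 := by
      intro K hK; rw [hVs]; exact Finset.mem_insert_of_mem hK
    have hVmem : ∀ K, K ∈ Vs0 ↔ (K = Mp ∨ (K ∈ Vs1 ∧ K ≠ M)) := by
      intro K
      rw [hVs, Finset.mem_insert]
      constructor
      · rintro (rfl | hK)
        · exact Or.inl rfl
        · exact Or.inr ⟨hK, fun h => hMnot (h ▸ hK)⟩
      · rintro (rfl | ⟨hK, -⟩)
        · exact Or.inl rfl
        · exact Or.inr hK
    have hadjMpK0 : (fromEdgeSet (↑Es0 : Set (Sym2 (Finset (Fin n))))).Adj Mp K0 := by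
      rw [fromEdgeSet_adj, Finset.mem_coe, hEs]
      exact ⟨Finset.mem_insert_self _ _, hMpK0⟩
    have hnbr : ∀ z, (fromEdgeSet (↑Es0 : Set (Sym2 (Finset (Fin n))))).Adj Mp z → z = K0 := by
      intro z hz
      rw [fromEdgeSet_adj, Finset.mem_coe, hEs, Finset.mem_insert] at hz
      obtain ⟨h1, h2⟩ := hz
      rcases h1 with h1 | h1
      · rcases Sym2.eq_iff.mp h1 with ⟨-, h⟩ | ⟨h, -⟩
        · exact h
        · exact absurd h hMpK0
      · exact absurd (ihE _ h1 Mp (by rw [Sym2.mem_iff]; exact Or.inl rfl)) hMpV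
    have hcongr : ∀ (S : Set (Finset (Fin n))), Mp ∉ S →
        (fromEdgeSet (↑Es0 : Set (Sym2 (Finset (Fin n))))).induce S =
          (fromEdgeSet (↑Es1 : Set (Sym2 (Finset (Fin n))))).induce S := by
      intro S hS
      apply induce_congr
      intro A hA B hB
      rw [fromEdgeSet_adj, fromEdgeSet_adj, Finset.mem_coe, Finset.mem_coe]
      refine and_congr_left (fun _ => ?_)
      rw [hEs, Finset.mem_insert]
      constructor
      · rintro (h | h)
        · rcases Sym2.eq_iff.mp h with ⟨h1, -⟩ | ⟨-, h1⟩
          · exact absurd (h1 ▸ hA) hS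
          · exact absurd (h1 ▸ hB) hS
        · exact h
      · exact Or.inr
    refine ⟨fun K => (hVmem K).trans (hnodes0 K).symm, ?_, ?_, ?_⟩
    · -- edges
      intro e he K hKe
      rw [hEs, Finset.mem_insert] at he
      rcases he with rfl | he
      · rw [Sym2.mem_iff] at hKe
        rcases hKe with h | h
        · exact (hVmem K).mpr (Or.inl h)
        · rw [h]; exact hVs1sub K0 hK0
      · exact hVs1sub K (ihE _ he K hKe)
    · -- tree
      have hcoe : (↑Vs0 : Set (Finset (Fin n))) = insert Mp (↑Vs1 : Set (Finset (Fin n))) := by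
        rw [hVs, Finset.coe_insert]
      rw [hcoe]
      refine isTree_insert_leaf (fun h => hMpV (Finset.mem_coe.mp h))
        (Finset.mem_coe.mpr hK0) hadjMpK0 hnbr ?_
      rw [hcongr _ (fun h => hMpV (Finset.mem_coe.mp h))]
      exact ihT
    · -- subtrees
      intro v hv
      rw [peoLater_succ hj, Finset.mem_insert] at hv
      rcases hv with rfl | hv
      · refine connected_induce_singleton _ _ Mp ?_
        ext K
        simp only [Set.mem_setOf_eq, Set.mem_singleton_iff]
        constructor
        · rintro ⟨hK, hvK⟩
          rcases (hVmem K).mp hK with rfl | ⟨hK1, -⟩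
          · rfl
          · exact absurd hvK (haK K hK1)
        · rintro rfl
          exact ⟨(hVmem Mp).mpr (Or.inl rfl), Finset.mem_insert_self _ _⟩
      · have hva : v ≠ a := fun h => haW (h ▸ hv)
        have hMpSv : Mp ∉ {K : Finset (Fin n) | K ∈ Vs1 ∧ v ∈ K} := fun h => hMpV h.1
        by_cases hvM : v ∈ M
        · have hset : {K : Finset (Fin n) | K ∈ Vs0 ∧ v ∈ K} =
              insert Mp {K : Finset (Fin n) | K ∈ Vs1 ∧ v ∈ K} := by
            ext K
            simp only [Set.mem_setOf_eq, Set.mem_insert_iff, hVs, Finset.mem_insert]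
            constructor
            · rintro ⟨rfl | hK, hvK⟩
              · exact Or.inl rfl
              · exact Or.inr ⟨hK, hvK⟩
            · rintro (rfl | ⟨hK, hvK⟩)
              · exact ⟨Or.inl rfl, Finset.mem_insert_of_mem hvM⟩
              · exact ⟨Or.inr hK, hvK⟩
          rw [hset]
          refine connected_insert ⟨hK0, hMK0 hvM⟩ hadjMpK0 ?_
          rw [hcongr _ hMpSv]
          exact ihS v hv
        · have hset : {K : Finset (Fin n) | K ∈ Vs0 ∧ v ∈ K} =
              {K : Finset (Fin n) | K ∈ Vs1 ∧ v ∈ K} := by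
            ext K
            simp only [Set.mem_setOf_eq, hVs, Finset.mem_insert]
            constructor
            · rintro ⟨rfl | hK, hvK⟩
              · rw [Finset.mem_insert] at hvK
                exact absurd (hvK.resolve_left hva) hvM
              · exact ⟨hK, hvK⟩
            · rintro ⟨hK, hvK⟩
              exact ⟨Or.inr hK, hvK⟩
          rw [hset, hcongr _ hMpSv]
          exact ihS v hv

lemma base_case (hn : 0 < n)
    {Vs : Finset (Finset (Fin n))} {Es : Finset (Sym2 (Finset (Fin n)))}
    (hbaseV : Vs = {({α (n - 1)} : Finset (Fin n))})
    (hbaseE : Es = ∅) :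
    IsCliqueTreeOn G (peoLater n α (n - 1)) Vs Es := by
  have hW : peoLater n α (n - 1) = {α (n - 1)} := peoLater_last hn
  refine ⟨?_, ?_, ?_, ?_⟩
  · intro K
    rw [hbaseV, Finset.mem_singleton, hW, maxclique_singleton]
  · intro e he
    rw [hbaseE] at he
    exact absurd he (Finset.notMem_empty e)
  · refine isTree_induce_singleton _ _ ({α (n - 1)} : Finset (Fin n)) ?_
    rw [hbaseV, Finset.coe_singleton]
  · intro v hv
    rw [hW, Finset.mem_singleton] at hv
    refine connected_induce_singleton _ _ ({α (n - 1)} : Finset (Fin n)) ?_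
    ext K
    simp only [Set.mem_setOf_eq, Set.mem_singleton_iff, hbaseV, Finset.mem_singleton]
    constructor
    · rintro ⟨h, -⟩; exact h
    · rintro rfl
      exact ⟨rfl, by rw [hv]; exact Finset.mem_singleton_self _⟩

end CT

/-- given a perfect elimination ordering `α` of a chordal graph `G`
and trees `T^{(j)} = (Vs j, Es j)` built by the recursive construction (base case at
position `n−1`; at each step either the node `M` is replaced by `M ∪ {α(j)}`, or a
new node `M ∪ {α(j)}` is attached to some node `K ⊇ M`), every `T^{(j)}` is a clique
tree of the subgraph induced by `{α(j),…,α(n−1)}`; in particular `T^{(0)}` is a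
clique tree of `G`. -/
theorem stmt17 (n : ℕ) (hn : 0 < n) (G : SimpleGraph (Fin n))
    (α : ℕ → Fin n) (hα : ∀ v : Fin n, ∃! j, j < n ∧ α j = v)
    (hpeo : ∀ j < n, G.IsClique (↑(laterNbrs G α j) : Set (Fin n)))
    (Vs : ℕ → Finset (Finset (Fin n))) (Es : ℕ → Finset (Sym2 (Finset (Fin n))))
    (hbaseV : Vs (n - 1) = {({α (n - 1)} : Finset (Fin n))})
    (hbaseE : Es (n - 1) = ∅)
    (hstep : ∀ j, j + 1 < n →
      (laterNbrs G α j ∈ Vs (j + 1) ∧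
        Vs j = insert (insert (α j) (laterNbrs G α j))
          (Vs (j + 1) \ {laterNbrs G α j}) ∧
        Es j = (Es (j + 1)).image (Sym2.map (fun K =>
          if K = laterNbrs G α j then insert (α j) (laterNbrs G α j) else K))) ∨
      (laterNbrs G α j ∉ Vs (j + 1) ∧
        ∃ K ∈ Vs (j + 1), laterNbrs G α j ⊆ K ∧
          Vs j = insert (insert (α j) (laterNbrs G α j)) (Vs (j + 1)) ∧
          Es j = insert s(insert (α j) (laterNbrs G α j), K) (Es (j + 1)))) :
    ∀ j < n, IsCliqueTreeOn G (peoLater n α j) (Vs j) (Es j) := by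
  have base : IsCliqueTreeOn G (peoLater n α (n - 1)) (Vs (n - 1)) (Es (n - 1)) :=
    CT.base_case hn hbaseV hbaseE
  have key : ∀ (d j : ℕ), j < n → n = j + d + 1 →
      IsCliqueTreeOn G (peoLater n α j) (Vs j) (Es j) := by
    intro d
    induction d with
    | zero =>
      intro j hj hnd
      have hj' : j = n - 1 := by omega
      rw [hj']
      exact base
    | succ d ih =>
      intro j hj hnd
      have hj1 : j + 1 < n := by omega
      exact CT.step_case hα hpeo hj1 (hstep j hj1) (ih (j + 1) hj1 (by omega))
  intro j hj
  exact key (n - j - 1) j hj (by omega)
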